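/- If a sequence (x_k) satisfies x_0 ∈ (0,1) and x_{k+1} = x_k / ((1 - x_k)·exp(-x_k(1 - x_k)) + x_k) for all k ≥ 0, then (x_k) is strictly increasing, stays in (0,1), and converges to 1 as k → ∞. -/

import Mathlib

open Filter in
theorem sgpo_first_coordinate_dynamics (x : ℕ → ℝ) (hx0 : x 0 ∈ Set.Ioo (0 : ℝ) 1)
    (hrec : ∀ k : ℕ, x (k + 1) =
      x k / ((1 - x k) * Real.exp (-(x k * (1 - x k))) + x k)) :
    StrictMono x ∧ (∀ k : ℕ, x k ∈ Set.Ioo (0 : ℝ) 1) ∧ Tendsto x atTop (nhds 1) := by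
  have hmem : ∀ k, x k ∈ Set.Ioo (0:ℝ) 1 := by
    intro k
    induction k with
    | zero => exact hx0
    | succ n ih =>
      obtain ⟨h0, h1⟩ := ih
      have he : Real.exp (-(x n * (1 - x n))) < 1 := by
        rw [Real.exp_lt_one_iff]; nlinarith
      have hepos : 0 < Real.exp (-(x n * (1 - x n))) := Real.exp_pos _
      have hd0 : 0 < (1 - x n) * Real.exp (-(x n * (1 - x n))) + x n := by nlinarith
      rw [hrec n]
      constructor
      · exact div_pos h0 hd0
      · rw [div_lt_one hd0]; nlinarith
  have hlt : ∀ k, x k < x (k + 1) := by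
    intro k
    obtain ⟨h0, h1⟩ := hmem k
    have he : Real.exp (-(x k * (1 - x k))) < 1 := by
      rw [Real.exp_lt_one_iff]; nlinarith
    have hepos : 0 < Real.exp (-(x k * (1 - x k))) := Real.exp_pos _
    have hd0 : 0 < (1 - x k) * Real.exp (-(x k * (1 - x k))) + x k := by nlinarith
    rw [hrec k, lt_div_iff₀ hd0]
    nlinarith [mul_pos (mul_pos h0 (sub_pos.mpr h1)) (sub_pos.mpr he)]
  have hsm : StrictMono x := strictMono_nat_of_lt_succ hlt
  have hbdd : BddAbove (Set.range x) := ⟨1, by rintro _ ⟨k, rfl⟩; exact (hmem k).2.le⟩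
  set L := ⨆ k, x k with hLdef
  have htend : Tendsto x atTop (nhds L) := tendsto_atTop_ciSup hsm.monotone hbdd
  have hL0 : 0 < L := lt_of_lt_of_le (hmem 0).1 (le_ciSup hbdd 0)
  have hL1 : L ≤ 1 := ciSup_le fun k => (hmem k).2.le
  have hDpos : 0 < (1 - L) * Real.exp (-(L * (1 - L))) + L := by
    have := Real.exp_pos (-(L * (1 - L)))
    nlinarith
  have hcont : ContinuousAt (fun y : ℝ => y / ((1 - y) * Real.exp (-(y * (1 - y))) + y)) L := by
    apply ContinuousAt.div
    · exact continuousAt_id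
    · fun_prop
    · exact ne_of_gt hDpos
  have htend2 : Tendsto (fun k => x (k + 1)) atTop
      (nhds (L / ((1 - L) * Real.exp (-(L * (1 - L))) + L))) := by
    have h := hcont.tendsto.comp htend
    have heq : (fun k => x (k + 1)) =
        (fun y : ℝ => y / ((1 - y) * Real.exp (-(y * (1 - y))) + y)) ∘ x := by
      funext k; exact hrec k
    rw [heq]; exact h
  have htend3 : Tendsto (fun k => x (k + 1)) atTop (nhds L) :=
    htend.comp (tendsto_add_atTop_nat 1)
  have hEq : L / ((1 - L) * Real.exp (-(L * (1 - L))) + L) = L :=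
    tendsto_nhds_unique htend2 htend3
  have hL : L = 1 := by
    by_contra hne
    have hL1' : L < 1 := lt_of_le_of_ne hL1 hne
    have he : Real.exp (-(L * (1 - L))) < 1 := by
      rw [Real.exp_lt_one_iff]; nlinarith
    have hD1 : (1 - L) * Real.exp (-(L * (1 - L))) + L = 1 := by
      field_simp at hEq
      exact hEq.symm
    nlinarith [mul_lt_mul_of_pos_left he (sub_pos.mpr hL1')]
  rw [hL] at htend
  exact ⟨hsm, hmem, htend⟩
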